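/- Let (Ω, ℱ, P) be a probability space and G an integrable real random variable with P(0 < G < 1) = 1. Let 0 ≤ ε₁ < ε₂ ≤ 1 and let q₁, q₂ be real numbers with P(G ≤ q₁) = ε₁ and P(G ≤ q₂) = ε₂. Then E[G·𝟙{G ≤ q₁}] − ε₁ > E[G·𝟙{G ≤ q₂}] − ε₂; that is, the lower-bound curve ε ↦ E[G·𝟙{G ≤ q_ε}] − ε is strictly decreasing in ε. -/

import Mathlib

open MeasureTheory
open scoped ENNReal


theorem aux_lemma
    {Ω : Type*} [MeasurableSpace Ω] (P : Measure Ω) [IsProbabilityMeasure P]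
    (G : Ω → ℝ) (hGm : Measurable G) (hG : Integrable G P)
    (hG01 : P {ω | 0 < G ω ∧ G ω < 1} = 1)
    (ε₁ ε₂ : ℝ) (hε₁ : 0 ≤ ε₁) (hε : ε₁ < ε₂) (hε₂ : ε₂ ≤ 1)
    (q₁ q₂ : ℝ)
    (hq₁ : P {ω | G ω ≤ q₁} = ENNReal.ofReal ε₁)
    (hq₂ : P {ω | G ω ≤ q₂} = ENNReal.ofReal ε₂) :
    (∫ ω, Set.indicator {ω | G ω ≤ q₁} G ω ∂P) - ε₁ >
      (∫ ω, Set.indicator {ω | G ω ≤ q₂} G ω ∂P) - ε₂ := by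
  set S₁ : Set Ω := {ω | G ω ≤ q₁} with hS₁def
  set S₂ : Set Ω := {ω | G ω ≤ q₂} with hS₂def
  have hmS₁ : MeasurableSet S₁ := hGm measurableSet_Iic
  have hmS₂ : MeasurableSet S₂ := hGm measurableSet_Iic
  -- q₁ < q₂
  have hq : q₁ < q₂ := by
    by_contra h
    push_neg at h
    have hsub : S₂ ⊆ S₁ := fun ω hω => le_trans hω h
    have : P S₂ ≤ P S₁ := measure_mono hsub
    rw [hq₁, hq₂] at this
    exact absurd ((ENNReal.ofReal_le_ofReal_iff hε₁).mp this) (not_le.mpr hε)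
  have hsub : S₁ ⊆ S₂ := fun ω hω => le_trans hω hq.le
  set A : Set Ω := S₂ \ S₁ with hAdef
  have hmA : MeasurableSet A := hmS₂.diff hmS₁
  have hμA : P A = ENNReal.ofReal (ε₂ - ε₁) := by
    rw [measure_diff hsub hmS₁.nullMeasurableSet (measure_ne_top P S₁), hq₁, hq₂,
      ENNReal.ofReal_sub _ hε₁]
  have hμA_toReal : (P A).toReal = ε₂ - ε₁ := by
    rw [hμA, ENNReal.toReal_ofReal (by linarith)]
  have hμApos : 0 < P A := by
    rw [hμA]; exact ENNReal.ofReal_pos.mpr (by linarith)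
  -- a.e. G < 1
  have hnull : P ({ω | 0 < G ω ∧ G ω < 1})ᶜ = 0 :=
    (prob_compl_eq_zero_iff
      (hGm (measurableSet_Ioo : MeasurableSet (Set.Ioo (0:ℝ) 1)))).mpr hG01
  have hae : ∀ᵐ ω ∂P, 0 < G ω ∧ G ω < 1 := by
    rw [MeasureTheory.ae_iff]; exact hnull
  -- key: ∫_A G < ε₂ - ε₁
  have hIntA : IntegrableOn G A P := hG.integrableOn
  have hIntA1 : IntegrableOn (fun ω => 1 - G ω) A P :=
    (integrable_const (1:ℝ)).integrableOn.sub hIntA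
  have hpos : 0 < ∫ ω in A, (1 - G ω) ∂P := by
    rw [MeasureTheory.setIntegral_pos_iff_support_of_nonneg_ae]
    · have h1 : P (A ∩ {ω | 0 < G ω ∧ G ω < 1}) = P A := measure_inter_conull hnull
      have h2 : A ∩ {ω | 0 < G ω ∧ G ω < 1} ⊆ (Function.support fun ω => 1 - G ω) ∩ A := by
        intro ω hω
        exact ⟨sub_ne_zero.mpr (ne_of_gt (by linarith [hω.2.2])), hω.1⟩
      calc (0:ℝ≥0∞) < P A := hμApos
        _ = P (A ∩ {ω | 0 < G ω ∧ G ω < 1}) := h1.symm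
        _ ≤ _ := measure_mono h2
    · filter_upwards [ae_restrict_of_ae hae] with ω hω
      simpa using sub_nonneg.mpr hω.2.le
    · exact hIntA1
  have hsubint : ∫ ω in A, (1 - G ω) ∂P = (ε₂ - ε₁) - ∫ ω in A, G ω ∂P := by
    rw [integral_sub (integrable_const (1:ℝ)).integrableOn hIntA]
    simp [hμA_toReal]
    exact hμA_toReal
  have hkey : ∫ ω in A, G ω ∂P < ε₂ - ε₁ := by
    rw [hsubint] at hpos; linarith
  -- split S₂
  have hsplit : ∫ ω in S₂, G ω ∂P = ∫ ω in S₁, G ω ∂P + ∫ ω in A, G ω ∂P := by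
    rw [← MeasureTheory.setIntegral_union disjoint_sdiff_self_right hmA hG.integrableOn hIntA,
      Set.union_diff_cancel hsub]
  rw [integral_indicator hmS₁, integral_indicator hmS₂]
  rw [show (∫ ω in S₂, G ω ∂P) = _ from hsplit]
  linarith

/-- Strict monotonicity of the lower-bound curve: for `G` supported in `(0,1)` and
`0 ≤ ε₁ < ε₂ ≤ 1` with corresponding quantiles `q₁`, `q₂`,
`E[G·𝟙{G ≤ q₁}] − ε₁ > E[G·𝟙{G ≤ q₂}] − ε₂`. -/
theorem lower_bound_curve_strict_mono
    {Ω : Type*} [MeasurableSpace Ω] (P : Measure Ω) [IsProbabilityMeasure P]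
    (G : Ω → ℝ) (hG : Integrable G P)
    (hG01 : P {ω | 0 < G ω ∧ G ω < 1} = 1)
    (ε₁ ε₂ : ℝ) (hε₁ : 0 ≤ ε₁) (hε : ε₁ < ε₂) (hε₂ : ε₂ ≤ 1)
    (q₁ q₂ : ℝ)
    (hq₁ : P {ω | G ω ≤ q₁} = ENNReal.ofReal ε₁)
    (hq₂ : P {ω | G ω ≤ q₂} = ENNReal.ofReal ε₂) :
    (∫ ω, Set.indicator {ω | G ω ≤ q₁} G ω ∂P) - ε₁ >
      (∫ ω, Set.indicator {ω | G ω ≤ q₂} G ω ∂P) - ε₂ := by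
  set g : Ω → ℝ := hG.1.mk G with hgdef
  have hgm : Measurable g := hG.1.stronglyMeasurable_mk.measurable
  have hge : G =ᵐ[P] g := hG.1.ae_eq_mk
  have hGg : Integrable g P := hG.congr hge
  have hset : ∀ q : ℝ, {ω | G ω ≤ q} =ᵐ[P] {ω | g ω ≤ q} := fun q =>
    hge.mono fun ω h => by show (G ω ≤ q) = (g ω ≤ q); rw [h]
  have hset01 : {ω | 0 < G ω ∧ G ω < 1} =ᵐ[P] {ω | 0 < g ω ∧ g ω < 1} :=
    hge.mono fun ω h => by
      show (0 < G ω ∧ G ω < 1) = (0 < g ω ∧ g ω < 1); rw [h]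
  have hind : ∀ q : ℝ,
      (∫ ω, Set.indicator {ω | G ω ≤ q} G ω ∂P)
        = ∫ ω, Set.indicator {ω | g ω ≤ q} g ω ∂P := by
    intro q
    refine integral_congr_ae (hge.mono fun ω h => ?_)
    simp only [Set.indicator_apply, Set.mem_setOf_eq, h]
  rw [hind q₁, hind q₂]
  exact aux_lemma P g hgm hGg (by rw [← measure_congr hset01]; exact hG01)
    ε₁ ε₂ hε₁ hε hε₂ q₁ q₂
    (by rw [← measure_congr (hset q₁)]; exact hq₁)
    (by rw [← measure_congr (hset q₂)]; exact hq₂)
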